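/- Let $\mathscr{D}$ be the standard dyadic grid, $\sigma_1,\dots,\sigma_m$ weights, $1<p_1,\dots,p_m<\infty$, $\frac1p=\sum_i \frac1{p_i}$, $p\in(1,\infty)$. If the nonnegative numbers $\{a_Q\}$ satisfy $\sum_{Q\subset R} a_Q \le A\int_R\prod_{i=1}^m \sigma_i^{p/p_i}$ for all $R\in\mathscr{D}$, then $\Big(\sum_{Q\in\mathscr{D}} a_Q\prod_{i=1}^m\Big(\frac{1}{\sigma_i(Q)}\int_Q f_i\sigma_i\Big)^p\Big)^{1/p}\le A^{1/p}\prod_{i=1}^m p_i'\,\|f_i\|_{L^{p_i}(\sigma_i)}$ for all nonnegative $f_i\in L^{p_i}(\sigma_i)$. -/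

import Mathlib

open MeasureTheory ENNReal

noncomputable section

/-- Points of `ℝⁿ`. -/
abbrev Rn (n : ℕ) := Fin n → ℝ

/-- The half-open cube with corner `c` and sidelength `h`. -/
def cube {n : ℕ} (c : Rn n) (h : ℝ) : Set (Rn n) :=
  Set.univ.pi fun i => Set.Ico (c i) (c i + h)

/-- `Q` is a (half-open, axis-parallel) cube. -/
def IsCube {n : ℕ} (Q : Set (Rn n)) : Prop := ∃ c h, 0 < h ∧ Q = cube c h

/-- The dyadic cube `2^{-k}([0,1)^n + j)` of the standard dyadic grid. -/
def dyadicCube {n : ℕ} (k : ℤ) (j : Fin n → ℤ) : Set (Rn n) :=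
  cube (fun i => (j i : ℝ) * (2:ℝ) ^ (-k)) ((2:ℝ) ^ (-k))

/-- `Q` belongs to the standard dyadic grid `𝒟`. -/
def IsDyadicCube {n : ℕ} (Q : Set (Rn n)) : Prop := ∃ k j, Q = dyadicCube k j

/-- `∫_Q g` of a (nonnegative) real function, as an element of `ℝ≥0∞`. -/
def setInt {n : ℕ} (Q : Set (Rn n)) (g : Rn n → ℝ) : ℝ≥0∞ :=
  ∫⁻ x in Q, ENNReal.ofReal (g x)

/-- The average `(1/|Q|)∫_Q g`. -/
def avg {n : ℕ} (Q : Set (Rn n)) (g : Rn n → ℝ) : ℝ≥0∞ := setInt Q g / volume Q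

/-- The weighted average `(1/σ(Q)) ∫_Q f σ`. -/
def wAvg {n : ℕ} (Q : Set (Rn n)) (σ f : Rn n → ℝ) : ℝ≥0∞ :=
  setInt Q (fun x => f x * σ x) / setInt Q σ

/-- The dyadic weighted multisublinear maximal operator `𝓜^d_{⃗σ}`. -/
def Mdw {n m : ℕ} (σ f : Fin m → Rn n → ℝ) (x : Rn n) : ℝ≥0∞ :=
  ⨆ (Q : Set (Rn n)) (_ : IsDyadicCube Q) (_ : x ∈ Q), ∏ i, wAvg Q (σ i) (f i)

/-- The dyadic weighted maximal operator `M^d_σ`. -/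
def Mdw1 {n : ℕ} (σ f : Rn n → ℝ) (x : Rn n) : ℝ≥0∞ :=
  ⨆ (Q : Set (Rn n)) (_ : IsDyadicCube Q) (_ : x ∈ Q), wAvg Q σ f

/-- The multisublinear maximal operator `𝓜` over all cubes. -/
def MM {n m : ℕ} (f : Fin m → Rn n → ℝ) (x : Rn n) : ℝ≥0∞ :=
  ⨆ (Q : Set (Rn n)) (_ : IsCube Q) (_ : x ∈ Q), ∏ i, avg Q (f i)

/-- The dyadic multisublinear maximal operator `𝓜^d`. -/
def MMd {n m : ℕ} (f : Fin m → Rn n → ℝ) (x : Rn n) : ℝ≥0∞ :=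
  ⨆ (Q : Set (Rn n)) (_ : IsDyadicCube Q) (_ : x ∈ Q), ∏ i, avg Q (f i)

/-- The Hardy–Littlewood maximal operator (over all cubes). -/
def HLM {n : ℕ} (g : Rn n → ℝ) (x : Rn n) : ℝ≥0∞ :=
  ⨆ (Q : Set (Rn n)) (_ : IsCube Q) (_ : x ∈ Q), avg Q g

/-- `(∫ g^p v dx)^{1/p}` for an `ℝ≥0∞`-valued `g`. -/
def nLp {n : ℕ} (p : ℝ) (v : Rn n → ℝ) (g : Rn n → ℝ≥0∞) : ℝ≥0∞ :=
  (∫⁻ x, g x ^ p * ENNReal.ofReal (v x)) ^ (1/p)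

/-- The `L^p(v)` norm of a (nonnegative) real function. -/
def nLpR {n : ℕ} (p : ℝ) (v f : Rn n → ℝ) : ℝ≥0∞ :=
  nLp p v (fun x => ENNReal.ofReal (f x))

/-- The conjugate exponent `q' = q/(q-1)`. -/
def conjExp (q : ℝ) : ℝ := q / (q - 1)

/-- The dual weights `σ_i = w_i^{1-p_i'}`. -/
def dualW {n m : ℕ} (p : Fin m → ℝ) (w : Fin m → Rn n → ℝ) : Fin m → Rn n → ℝ :=
  fun i x => w i x ^ (1 - conjExp (p i))

/-- The geometric average `exp((1/|Q|)∫_Q log g)`, realized (in the extended sense)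
as `inf_{r>0} ((1/|Q|)∫_Q g^r)^{1/r}`. -/
def expLogAvg {n : ℕ} (Q : Set (Rn n)) (g : Rn n → ℝ) : ℝ≥0∞ :=
  ⨅ (r : ℝ) (_ : 0 < r), ((∫⁻ x in Q, ENNReal.ofReal (g x) ^ r) / volume Q) ^ (1/r)

/-- A sparse family of cubes indexed by `ℤ × J`. -/
def IsSparse {n : ℕ} (J : Type) (Q : ℤ → J → Set (Rn n)) : Prop :=
  (∀ (k : ℤ) (j j' : J), j ≠ j' → Q k j ∩ Q k j' = ∅) ∧
  (∀ k : ℤ, (⋃ j, Q (k+1) j) ⊆ ⋃ j, Q k j) ∧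
  (∀ (k : ℤ) (j : J), volume ((⋃ j', Q (k+1) j') ∩ Q k j) ≤ volume (Q k j) / 2)

/-- A general dyadic grid. -/
def IsDyadicGrid {n : ℕ} (G : Set (Set (Rn n))) : Prop :=
  (∀ Q ∈ G, ∃ (k : ℤ) (c : Rn n), Q = cube c ((2:ℝ) ^ k)) ∧
  (∀ Q ∈ G, ∀ R ∈ G, Q ∩ R = Q ∨ Q ∩ R = R ∨ Q ∩ R = ∅) ∧
  (∀ k : ℤ,
    ⋃₀ {Q | Q ∈ G ∧ ∃ c, Q = cube c ((2:ℝ) ^ k)} = Set.univ ∧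
    {Q | Q ∈ G ∧ ∃ c, Q = cube c ((2:ℝ) ^ k)}.Pairwise fun Q R => Q ∩ R = ∅)
section AuxGeom

open Set

variable {n : ℕ}

lemma two_zpow_pos (k : ℤ) : (0:ℝ) < 2 ^ k := zpow_pos (by norm_num) k

lemma mem_dyadicCube_iff {k : ℤ} {j : Fin n → ℤ} {x : Rn n} :
    x ∈ dyadicCube k j ↔ ∀ i, (j i : ℝ) ≤ x i * 2 ^ k ∧ x i * 2 ^ k < j i + 1 := by
  have h2 : (0:ℝ) < 2 ^ k := two_zpow_pos k
  simp only [dyadicCube, cube, Set.mem_pi, Set.mem_univ, forall_true_left, Set.mem_Ico]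
  refine forall_congr' fun i => and_congr ?_ ?_
  · rw [zpow_neg, ← div_eq_mul_inv, div_le_iff₀ h2]
  · have : (j i : ℝ) * (2:ℝ) ^ (-k) + (2:ℝ) ^ (-k) = ((j i : ℝ) + 1) / 2 ^ k := by
      rw [zpow_neg, ← div_eq_mul_inv]
      field_simp
    rw [this, lt_div_iff₀ h2]

lemma dyadicCube_nonempty (k : ℤ) (j : Fin n → ℤ) : (dyadicCube k j).Nonempty := by
  refine ⟨fun i => (j i : ℝ) * 2 ^ (-k), mem_dyadicCube_iff.2 fun i => ?_⟩
  have h2 : ((2:ℝ) ^ (-k)) * 2 ^ k = 1 := by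
    rw [← zpow_add₀ (by norm_num : (2:ℝ) ≠ 0)]; simp
  constructor
  · rw [mul_assoc, h2, mul_one]
  · rw [mul_assoc, h2, mul_one]; linarith

lemma IsDyadicCube.nonempty {Q : Set (Rn n)} (hQ : IsDyadicCube Q) : Q.Nonempty := by
  obtain ⟨k, j, rfl⟩ := hQ; exact dyadicCube_nonempty k j

lemma IsDyadicCube.measurableSet {Q : Set (Rn n)} (hQ : IsDyadicCube Q) : MeasurableSet Q := by
  obtain ⟨k, j, rfl⟩ := hQ
  exact MeasurableSet.univ_pi fun i => measurableSet_Ico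

lemma dyadicCube_subset_of_le {k k' : ℤ} {j j' : Fin n → ℤ} (hk : k ≤ k') {x : Rn n}
    (hx : x ∈ dyadicCube k j) (hx' : x ∈ dyadicCube k' j') :
    dyadicCube k' j' ⊆ dyadicCube k j := by
  intro z hz
  rw [mem_dyadicCube_iff] at hx hx' hz ⊢
  intro i
  obtain ⟨ha, ha1⟩ := hx i
  obtain ⟨hb, hb1⟩ := hx' i
  obtain ⟨hz1, hz2⟩ := hz i
  set D : ℝ := (2:ℝ) ^ (k' - k) with hD
  have hDpos : (0:ℝ) < D := two_zpow_pos _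
  have hDint : ∃ Dz : ℤ, (Dz : ℝ) = D := by
    refine ⟨2 ^ (k' - k).toNat, ?_⟩
    push_cast
    rw [← zpow_natCast (2:ℝ), Int.toNat_of_nonneg (sub_nonneg.2 hk), hD]
  obtain ⟨Dz, hDz⟩ := hDint
  have hsplit : ∀ y : ℝ, y * 2 ^ k' = y * 2 ^ k * D := by
    intro y
    rw [hD, mul_assoc, ← zpow_add₀ (by norm_num : (2:ℝ) ≠ 0)]
    ring_nf
  -- integer inequalities
  have key1 : (j i : ℝ) * D ≤ j' i := by
    have h1 : (j i : ℝ) * D ≤ x i * 2 ^ k' := by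
      rw [hsplit]; exact mul_le_mul_of_nonneg_right ha hDpos.le
    have h2 : (j i : ℝ) * D < j' i + 1 := lt_of_le_of_lt h1 hb1
    have : (j i * Dz : ℤ) < j' i + 1 := by
      exact_mod_cast (by push_cast [hDz]; exact h2 : ((j i * Dz : ℤ) : ℝ) < ((j' i + 1 : ℤ) : ℝ))
    have : (j i * Dz : ℤ) ≤ j' i := by omega
    calc (j i : ℝ) * D = ((j i * Dz : ℤ) : ℝ) := by push_cast [hDz]; ring
    _ ≤ j' i := by exact_mod_cast this
  have key2 : (j' i : ℝ) + 1 ≤ ((j i : ℝ) + 1) * D := by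
    have h1 : x i * 2 ^ k' < ((j i : ℝ) + 1) * D := by
      rw [hsplit]; exact mul_lt_mul_of_pos_right ha1 hDpos
    have h2 : (j' i : ℝ) < ((j i : ℝ) + 1) * D := lt_of_le_of_lt hb h1
    have : (j' i : ℤ) < (j i + 1) * Dz := by
      exact_mod_cast (by push_cast [hDz]; linarith : ((j' i : ℤ) : ℝ) < (((j i + 1) * Dz : ℤ) : ℝ))
    have : (j' i : ℤ) + 1 ≤ (j i + 1) * Dz := by omega
    calc (j' i : ℝ) + 1 = (((j' i : ℤ) + 1 : ℤ) : ℝ) := by push_cast; ring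
    _ ≤ (((j i + 1) * Dz : ℤ) : ℝ) := by exact_mod_cast this
    _ = ((j i : ℝ) + 1) * D := by push_cast [hDz]; ring
  constructor
  · have : (j i : ℝ) * D ≤ z i * 2 ^ k * D := by
      rw [← hsplit]; exact le_trans key1 hz1
    have := le_of_mul_le_mul_right this hDpos
    linarith [this]
  · have : z i * 2 ^ k * D < ((j i : ℝ) + 1) * D := by
      rw [← hsplit]; exact lt_of_lt_of_le hz2 key2
    have := lt_of_mul_lt_mul_right this hDpos.le
    linarith [this]

lemma IsDyadicCube.subset_or_subset {Q R : Set (Rn n)} (hQ : IsDyadicCube Q)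
    (hR : IsDyadicCube R) (hne : (Q ∩ R).Nonempty) : Q ⊆ R ∨ R ⊆ Q := by
  obtain ⟨k, j, rfl⟩ := hQ
  obtain ⟨k', j', rfl⟩ := hR
  obtain ⟨x, hx, hx'⟩ := hne
  rcases le_total k k' with h | h
  · exact Or.inr (dyadicCube_subset_of_le h hx hx')
  · exact Or.inl (dyadicCube_subset_of_le h hx' hx)

end AuxGeom

section AuxMeas

open Set MeasureTheory

variable {n : ℕ}

lemma setInt_ne_top {Q : Set (Rn n)} (hQ : IsDyadicCube Q) {g : Rn n → ℝ}
    (hg : LocallyIntegrable g volume) : setInt Q g ≠ ∞ := by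
  obtain ⟨k, j, rfl⟩ := hQ
  set K : Set (Rn n) := Set.univ.pi fun i =>
    Set.Icc ((j i : ℝ) * 2 ^ (-k)) ((j i : ℝ) * 2 ^ (-k) + 2 ^ (-k)) with hK
  have hKc : IsCompact K := isCompact_univ_pi fun i => isCompact_Icc
  have hsub : dyadicCube k j ⊆ K := by
    intro x hx
    simp only [dyadicCube, cube, Set.mem_pi, Set.mem_univ, forall_true_left, Set.mem_Ico] at hx
    exact Set.mem_univ_pi.2 fun i => ⟨(hx i).1, le_of_lt (hx i).2⟩
  have hint : IntegrableOn g K volume := hg.integrableOn_isCompact hKc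
  have h1 : setInt (dyadicCube k j) g ≤ ∫⁻ x in K, ‖g x‖₊ := by
    refine le_trans (lintegral_mono_set hsub) (lintegral_mono fun x => ?_)
    exact Real.ofReal_le_enorm (g x)
  exact ne_top_of_le_ne_top hint.2.ne h1

lemma ennreal_le_rpow_add_one {p : ℝ} (hp : 1 ≤ p) (x : ℝ≥0∞) : x ≤ x ^ p + 1 := by
  rcases le_total x 1 with h | h
  · exact le_add_left h
  · exact le_trans (by simpa using ENNReal.rpow_le_rpow_of_exponent_le h hp) le_self_add

lemma setInt_mul_ne_top {Q : Set (Rn n)} (hQ : IsDyadicCube Q) {σ f : Rn n → ℝ} {p : ℝ}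
    (hp : 1 ≤ p) (hσm : Measurable σ) (hσloc : LocallyIntegrable σ volume)
    (hf0 : ∀ x, 0 ≤ f x) (hfm : Measurable f)
    (hfLp : (∫⁻ x, ENNReal.ofReal (f x) ^ p * ENNReal.ofReal (σ x)) < ∞) :
    setInt Q (fun x => f x * σ x) ≠ ∞ := by
  have hb : setInt Q (fun x => f x * σ x) ≤
      (∫⁻ x, ENNReal.ofReal (f x) ^ p * ENNReal.ofReal (σ x)) + setInt Q σ := by
    have hle : ∀ x, ENNReal.ofReal (f x * σ x) ≤
        ENNReal.ofReal (f x) ^ p * ENNReal.ofReal (σ x) + ENNReal.ofReal (σ x) := by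
      intro x
      rw [ENNReal.ofReal_mul (hf0 x)]
      calc ENNReal.ofReal (f x) * ENNReal.ofReal (σ x)
          ≤ (ENNReal.ofReal (f x) ^ p + 1) * ENNReal.ofReal (σ x) :=
            mul_le_mul_left (ennreal_le_rpow_add_one hp _) _
        _ = _ := by ring
    calc setInt Q (fun x => f x * σ x)
        ≤ ∫⁻ x in Q, (ENNReal.ofReal (f x) ^ p * ENNReal.ofReal (σ x) + ENNReal.ofReal (σ x)) :=
          lintegral_mono fun x => hle x
      _ = (∫⁻ x in Q, ENNReal.ofReal (f x) ^ p * ENNReal.ofReal (σ x)) + setInt Q σ :=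
          lintegral_add_left (by fun_prop) _
      _ ≤ _ := by
          gcongr
          exact Measure.restrict_le_self
  exact ne_top_of_le_ne_top (by
    exact ENNReal.add_ne_top.2 ⟨hfLp.ne, setInt_ne_top hQ hσloc⟩) hb

lemma setInt_sigma_zero {Q : Set (Rn n)} (hQm : MeasurableSet Q) {σ f : Rn n → ℝ}
    (hσ0 : ∀ x, 0 ≤ σ x) (hσm : Measurable σ) (hf0 : ∀ x, 0 ≤ f x) (hfm : Measurable f)
    (h0 : setInt Q σ = 0) : setInt Q (fun x => f x * σ x) = 0 := by
  rw [setInt, lintegral_eq_zero_iff (by fun_prop)] at h0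
  rw [setInt, lintegral_eq_zero_iff (by fun_prop)]
  filter_upwards [h0] with x hx
  simp only [Pi.zero_apply, ENNReal.ofReal_eq_zero] at hx ⊢
  nlinarith [hf0 x, hσ0 x, hx]

lemma wAvg_ne_top {Q : Set (Rn n)} (hQ : IsDyadicCube Q) {σ f : Rn n → ℝ} {p : ℝ}
    (hp : 1 ≤ p) (hσ0 : ∀ x, 0 ≤ σ x) (hσm : Measurable σ) (hσloc : LocallyIntegrable σ volume)
    (hf0 : ∀ x, 0 ≤ f x) (hfm : Measurable f)
    (hfLp : (∫⁻ x, ENNReal.ofReal (f x) ^ p * ENNReal.ofReal (σ x)) < ∞) :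
    wAvg Q σ f ≠ ∞ := by
  rw [wAvg]
  intro htop
  rcases ENNReal.div_eq_top.1 htop with ⟨hne, h0⟩ | ⟨htop', _⟩
  · exact hne (setInt_sigma_zero hQ.measurableSet hσ0 hσm hf0 hfm h0)
  · exact setInt_mul_ne_top hQ hp hσm hσloc hf0 hfm hfLp htop'

end AuxMeas

section Msup

open Set MeasureTheory
open scoped Classical

variable {n : ℕ}

/-- maximal function adapted to the finite family `F` of cubes, with "values" `g Q`. -/
def MsupF (F : Finset (Set (Rn n))) (g : Set (Rn n) → ℝ≥0∞) (x : Rn n) : ℝ≥0∞ :=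
  F.sup fun Q => Q.indicator (fun _ => g Q) x

lemma lt_msupF_iff {F : Finset (Set (Rn n))} {g : Set (Rn n) → ℝ≥0∞} {x : Rn n} {c : ℝ≥0∞} :
    c < MsupF F g x ↔ ∃ Q ∈ F, x ∈ Q ∧ c < g Q := by
  rw [MsupF, Finset.lt_sup_iff]
  constructor
  · rintro ⟨Q, hQ, hlt⟩
    by_cases hx : x ∈ Q
    · exact ⟨Q, hQ, hx, by rwa [Set.indicator_of_mem hx] at hlt⟩
    · rw [Set.indicator_of_notMem hx] at hlt
      exact absurd hlt (by simp)
  · rintro ⟨Q, hQ, hx, h⟩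
    exact ⟨Q, hQ, by rwa [Set.indicator_of_mem hx]⟩

lemma measurable_msupF {F : Finset (Set (Rn n))} {g : Set (Rn n) → ℝ≥0∞}
    (hF : ∀ Q ∈ F, MeasurableSet Q) : Measurable (MsupF F g) := by
  classical
  induction F using Finset.induction_on with
  | empty =>
    have : MsupF (∅ : Finset (Set (Rn n))) g = fun _ => 0 := by
      funext x; simp [MsupF]
    rw [this]; exact measurable_const
  | @insert Q F hQF ih =>
    have h1 : Measurable fun x => Q.indicator (fun _ => g Q) x :=
      Measurable.indicator measurable_const (hF Q (Finset.mem_insert_self _ _))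
    have h2 := ih fun R hR => hF R (Finset.mem_insert_of_mem hR)
    have : MsupF (insert Q F) g = fun x =>
        Q.indicator (fun _ => g Q) x ⊔ MsupF F g x := by
      funext x; rw [MsupF, Finset.sup_insert]; rfl
    rw [this]
    exact h1.sup h2

lemma msupF_ne_top {F : Finset (Set (Rn n))} {g : Set (Rn n) → ℝ≥0∞}
    (hg : ∀ Q ∈ F, g Q ≠ ∞) (x : Rn n) : MsupF F g x ≠ ∞ := by
  rw [MsupF, ← lt_top_iff_ne_top, Finset.sup_lt_iff (by simp)]
  intro Q hQ
  refine lt_of_le_of_lt ?_ (lt_top_iff_ne_top.2 (hg Q hQ))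
  exact Set.indicator_le_self' (by simp) x

lemma msupF_le_prod {m : ℕ} {F : Finset (Set (Rn n))} {w : Fin m → Set (Rn n) → ℝ≥0∞}
    (x : Rn n) : MsupF F (fun Q => ∏ i, w i Q) x ≤ ∏ i, MsupF F (w i) x := by
  rw [MsupF, Finset.sup_le_iff]
  intro Q hQ
  by_cases hx : x ∈ Q
  · rw [Set.indicator_of_mem hx]
    refine Finset.prod_le_prod' fun i _ => ?_
    refine le_trans ?_ (Finset.le_sup (f := fun Q => Q.indicator (fun _ => w i Q) x) hQ)
    rw [Set.indicator_of_mem hx]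
  · rw [Set.indicator_of_notMem hx]; exact zero_le

lemma msupF_le_const_indicator {F : Finset (Set (Rn n))} {g : Set (Rn n) → ℝ≥0∞} (x : Rn n) :
    MsupF F g x ≤ {y | ∃ Q ∈ F, y ∈ Q}.indicator (fun _ => F.sup g) x := by
  rw [MsupF, Finset.sup_le_iff]
  intro Q hQ
  by_cases hx : x ∈ Q
  · rw [Set.indicator_of_mem hx, Set.indicator_of_mem (by exact ⟨Q, hQ, hx⟩)]
    exact Finset.le_sup hQ
  · rw [Set.indicator_of_notMem hx]; exact zero_le

/-- the maximal cubes of the family `F` among those with `t < g Q`. -/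
def maxCubes (F : Finset (Set (Rn n))) (g : Set (Rn n) → ℝ≥0∞) (t : ℝ≥0∞) :
    Finset (Set (Rn n)) :=
  (F.filter fun Q => t < g Q).filter fun R => ∀ Q ∈ F.filter fun Q => t < g Q, ¬R ⊂ Q

lemma maxCubes_mem {F : Finset (Set (Rn n))} {g : Set (Rn n) → ℝ≥0∞} {t : ℝ≥0∞}
    {R : Set (Rn n)} (hR : R ∈ maxCubes F g t) : R ∈ F ∧ t < g R := by
  have := (Finset.mem_filter.1 hR).1
  exact ⟨(Finset.mem_filter.1 this).1, (Finset.mem_filter.1 this).2⟩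

lemma exists_maxCube {F : Finset (Set (Rn n))} {g : Set (Rn n) → ℝ≥0∞} {t : ℝ≥0∞}
    {Q : Set (Rn n)} (hQ : Q ∈ F) (ht : t < g Q) : ∃ R ∈ maxCubes F g t, Q ⊆ R := by
  classical
  set Ft := F.filter fun Q => t < g Q with hFt
  have hQFt : Q ∈ Ft := Finset.mem_filter.2 ⟨hQ, ht⟩
  set s : Set (Set (Rn n)) := {R | R ∈ Ft ∧ Q ⊆ R} with hs
  have hsfin : s.Finite := Set.Finite.subset Ft.finite_toSet fun R hR => hR.1
  have hsne : s.Nonempty := ⟨Q, hQFt, subset_rfl⟩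
  obtain ⟨R, hRs, hRmax⟩ := Set.Finite.exists_maximalFor id s hsfin hsne
  refine ⟨R, ?_, hRs.2⟩
  refine Finset.mem_filter.2 ⟨hRs.1, fun Q' hQ' hss => ?_⟩
  have hQ'c : Q' ∈ s := ⟨hQ', hRs.2.trans hss.subset⟩
  exact hss.2 (hRmax hQ'c hss.subset)

lemma maxCubes_pairwise_disjoint {F : Finset (Set (Rn n))} (hF : ∀ Q ∈ F, IsDyadicCube Q)
    {g : Set (Rn n) → ℝ≥0∞} {t : ℝ≥0∞} {R R' : Set (Rn n)} (hR : R ∈ maxCubes F g t)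
    (hR' : R' ∈ maxCubes F g t) (hne : R ≠ R') : Disjoint R R' := by
  rw [Set.disjoint_iff_inter_eq_empty]
  by_contra hcon
  have hinter : (R ∩ R').Nonempty := Set.nonempty_iff_ne_empty.2 hcon
  have hdR := hF R (maxCubes_mem hR).1
  have hdR' := hF R' (maxCubes_mem hR').1
  rcases hdR.subset_or_subset hdR' hinter with h | h
  · exact (Finset.mem_filter.1 hR).2 R' (Finset.mem_filter.1 hR').1 (h.ssubset_of_ne hne)
  · exact (Finset.mem_filter.1 hR').2 R (Finset.mem_filter.1 hR).1 (h.ssubset_of_ne hne.symm)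

lemma biUnion_maxCubes {F : Finset (Set (Rn n))} {g : Set (Rn n) → ℝ≥0∞} {t : ℝ≥0∞} :
    (⋃ R ∈ maxCubes F g t, R) = {x | t < MsupF F g x} := by
  ext x
  simp only [Set.mem_iUnion, Set.mem_setOf_eq, lt_msupF_iff]
  constructor
  · rintro ⟨R, hR, hx⟩
    exact ⟨R, (maxCubes_mem hR).1, hx, (maxCubes_mem hR).2⟩
  · rintro ⟨Q, hQ, hx, ht⟩
    obtain ⟨R, hR, hsub⟩ := exists_maxCube hQ ht
    exact ⟨R, hR, hsub hx⟩

end Msup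

section OneVar

open Set MeasureTheory

lemma lintegral_Ioi_rpow_indicator {q : ℝ} (hq : 0 < q) {c : ℝ≥0∞} (hc : c ≠ ∞) :
    ∫⁻ t in Ioi (0:ℝ), {t : ℝ | ENNReal.ofReal t < c}.indicator
      (fun t => ENNReal.ofReal (t ^ (q - 1))) t = c ^ q / ENNReal.ofReal q := by
  have hS : MeasurableSet {t : ℝ | ENNReal.ofReal t < c} :=
    measurableSet_lt (by fun_prop) measurable_const
  have hseteq : {t : ℝ | ENNReal.ofReal t < c} ∩ Ioi 0 = Ioo 0 c.toReal := by
    ext t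
    simp only [Set.mem_inter_iff, Set.mem_setOf_eq, Set.mem_Ioi, Set.mem_Ioo]
    constructor
    · rintro ⟨h1, h2⟩
      exact ⟨h2, (ENNReal.ofReal_lt_iff_lt_toReal h2.le hc).1 h1⟩
    · rintro ⟨h1, h2⟩
      exact ⟨(ENNReal.ofReal_lt_iff_lt_toReal h1.le hc).2 h2, h1⟩
  rw [lintegral_indicator hS, Measure.restrict_restrict hS, hseteq]
  set b := c.toReal with hb
  have hb0 : 0 ≤ b := ENNReal.toReal_nonneg
  have hq1 : (-1:ℝ) < q - 1 := by linarith
  have hint : IntegrableOn (fun t : ℝ => t ^ (q - 1)) (Ioo 0 b) volume := by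
    have h1 : IntervalIntegrable (fun t : ℝ => t ^ (q - 1)) volume 0 b :=
      intervalIntegral.intervalIntegrable_rpow' hq1
    exact (intervalIntegrable_iff_integrableOn_Ioo_of_le hb0).1 h1
  have hnn : 0 ≤ᵐ[volume.restrict (Ioo (0:ℝ) b)] fun t : ℝ => t ^ (q - 1) := by
    filter_upwards [self_mem_ae_restrict measurableSet_Ioo] with t ht
    exact Real.rpow_nonneg ht.1.le _
  rw [← ofReal_integral_eq_lintegral_ofReal hint hnn]
  have hval : ∫ t in Ioo (0:ℝ) b, t ^ (q - 1) = b ^ q / q := by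
    rw [← integral_Ioc_eq_integral_Ioo, ← intervalIntegral.integral_of_le hb0,
      integral_rpow (Or.inl hq1)]
    rw [Real.zero_rpow (by linarith : q - 1 + 1 ≠ 0)]
    ring_nf
  rw [hval, ENNReal.ofReal_div_of_pos hq, ← ENNReal.ofReal_rpow_of_nonneg hb0 hq.le,
    ENNReal.ofReal_toReal hc]

end OneVar

section MaxThm

open Set MeasureTheory
open scoped Classical

lemma maxthmF {n : ℕ} (F : Finset (Set (Rn n))) (hF : ∀ Q ∈ F, IsDyadicCube Q)
    {p : ℝ} (hp : 1 < p) {σ f : Rn n → ℝ} (hσ0 : ∀ x, 0 ≤ σ x) (hσm : Measurable σ)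
    (hσloc : LocallyIntegrable σ volume) (hf0 : ∀ x, 0 ≤ f x) (hfm : Measurable f)
    (hfLp : (∫⁻ x, ENNReal.ofReal (f x) ^ p * ENNReal.ofReal (σ x)) < ∞) :
    (∫⁻ x, MsupF F (fun Q => wAvg Q σ f) x ^ p * ENNReal.ofReal (σ x)) ≤
      (ENNReal.ofReal (conjExp p) * nLpR p σ f) ^ p := by
  have hp0 : (0:ℝ) < p := by linarith
  have hp1 : (0:ℝ) < p - 1 := by linarith
  set σ' : Rn n → ℝ≥0∞ := fun x => ENNReal.ofReal (σ x) with hσ'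
  set f' : Rn n → ℝ≥0∞ := fun x => ENNReal.ofReal (f x) with hf'
  have hσ'm : Measurable σ' := by fun_prop
  have hf'm : Measurable f' := by fun_prop
  set w : Set (Rn n) → ℝ≥0∞ := fun Q => wAvg Q σ f with hw
  set M : Rn n → ℝ≥0∞ := MsupF F w with hM
  have hQm : ∀ Q ∈ F, MeasurableSet Q := fun Q hQ => (hF Q hQ).measurableSet
  have hMm : Measurable M := measurable_msupF hQm
  have hwne : ∀ Q ∈ F, w Q ≠ ∞ := fun Q hQ =>
    wAvg_ne_top (hF Q hQ) hp.le hσ0 hσm hσloc hf0 hfm hfLp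
  have hMne : ∀ x, M x ≠ ∞ := fun x => msupF_ne_top hwne x
  set ν : Measure (Rn n) := volume.withDensity σ' with hν
  set ρ : Measure (Rn n) := volume.withDensity (fun x => f' x * σ' x) with hρ
  have hνQ : ∀ Q ∈ F, ν Q = setInt Q σ := fun Q hQ => by
    rw [hν, withDensity_apply _ (hQm Q hQ)]; rfl
  have hρQ : ∀ {Q : Set (Rn n)}, MeasurableSet Q → ρ Q = setInt Q (fun x => f x * σ x) := by
    intro Q hQ
    rw [hρ, withDensity_apply _ hQ, setInt]
    refine setLIntegral_congr_fun hQ (fun x _ => ?_)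
    rw [ENNReal.ofReal_mul (hf0 x)]
  set X : ℝ≥0∞ := ∫⁻ x, M x ^ p * σ' x with hX
  -- finiteness of X
  have hXfin : X ≠ ∞ := by
    set C : ℝ≥0∞ := F.sup w with hC
    have hCfin : C ≠ ∞ := by
      rw [hC, ← lt_top_iff_ne_top, Finset.sup_lt_iff (by simp)]
      exact fun Q hQ => lt_top_iff_ne_top.2 (hwne Q hQ)
    set U : Set (Rn n) := {y | ∃ Q ∈ F, y ∈ Q} with hU
    have hUeq : U = ⋃ Q ∈ F, Q := by ext y; simp [hU]
    have hUm : MeasurableSet U := by rw [hUeq]; exact F.measurableSet_biUnion hQm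
    have hptw : ∀ x, M x ^ p * σ' x ≤ U.indicator (fun y => C ^ p * σ' y) x := by
      intro x
      by_cases hx : x ∈ U
      · rw [Set.indicator_of_mem hx]
        refine mul_le_mul_left ?_ _
        refine le_trans (ENNReal.rpow_le_rpow (msupF_le_const_indicator x) hp0.le) ?_
        rw [Set.indicator_of_mem hx]
      · have : M x = 0 := by
          rw [hM, MsupF]
          refine le_antisymm (Finset.sup_le fun Q hQ => ?_) (zero_le)
          rw [Set.indicator_of_notMem (fun hxQ => hx ⟨Q, hQ, hxQ⟩)]
        rw [Set.indicator_of_notMem hx, this, ENNReal.zero_rpow_of_pos hp0, zero_mul]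
    have h1 : X ≤ C ^ p * ν U := by
      calc X ≤ ∫⁻ x, U.indicator (fun y => C ^ p * σ' y) x := lintegral_mono hptw
        _ = ∫⁻ x in U, C ^ p * σ' x := lintegral_indicator hUm _
        _ = C ^ p * ∫⁻ x in U, σ' x := lintegral_const_mul _ (by fun_prop)
        _ = C ^ p * ν U := by rw [hν, withDensity_apply _ hUm]
    have h2 : ν U < ∞ := by
      rw [hUeq]
      refine lt_of_le_of_lt (measure_biUnion_finset_le F id) ?_
      rw [ENNReal.sum_lt_top]
      intro Q hQ
      rw [id, hνQ Q hQ]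
      exact lt_top_iff_ne_top.2 (setInt_ne_top (hF Q hQ) hσloc)
    exact ne_top_of_le_ne_top
      (ENNReal.mul_ne_top (ENNReal.rpow_ne_top_of_nonneg hp0.le hCfin) h2.ne) h1
  -- layer cake
  have hXint : X = ∫⁻ x, ENNReal.ofReal ((M x).toReal ^ p) ∂ν := by
    rw [hν, lintegral_withDensity_eq_lintegral_mul _ hσ'm (by fun_prop)]
    refine lintegral_congr fun x => ?_
    simp only [Pi.mul_apply]
    rw [← ENNReal.ofReal_rpow_of_nonneg ENNReal.toReal_nonneg hp0.le,
      ENNReal.ofReal_toReal (hMne x)]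
    exact mul_comm _ _
  have hlc : X = ENNReal.ofReal p *
      ∫⁻ t in Ioi (0:ℝ), ν {x | t < (M x).toReal} * ENNReal.ofReal (t ^ (p - 1)) := by
    rw [hXint]
    exact lintegral_rpow_eq_lintegral_meas_lt_mul ν
      (Filter.Eventually.of_forall fun x => ENNReal.toReal_nonneg)
      (hMm.ennreal_toReal.aemeasurable) hp0
  have hEeq : ∀ t : ℝ, 0 ≤ t → {x | t < (M x).toReal} = {x | ENNReal.ofReal t < M x} := by
    intro t ht
    ext x
    simp only [Set.mem_setOf_eq]
    exact (ENNReal.ofReal_lt_iff_lt_toReal ht (hMne x)).symm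
  have hEm : ∀ T : ℝ≥0∞, MeasurableSet {x | T < M x} :=
    fun T => measurableSet_lt measurable_const hMm
  -- weak type bound
  have hweak : ∀ t : ℝ, 0 < t →
      ENNReal.ofReal t * ν {x | ENNReal.ofReal t < M x} ≤ ρ {x | ENNReal.ofReal t < M x} := by
    intro t ht
    set T := ENNReal.ofReal t with hT
    have hE : {x | T < M x} = ⋃ R ∈ maxCubes F w T, R := (biUnion_maxCubes).symm
    have hdisj : (↑(maxCubes F w T) : Set (Set (Rn n))).PairwiseDisjoint
        (fun R => R) := fun R hR R' hR' hne => maxCubes_pairwise_disjoint hF hR hR' hne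
    have hmQ : ∀ R ∈ maxCubes F w T, MeasurableSet R :=
      fun R hR => (hF R (maxCubes_mem hR).1).measurableSet
    have hνE : ν {x | T < M x} = ∑ R ∈ maxCubes F w T, ν R := by
      rw [hE]; exact measure_biUnion_finset hdisj hmQ
    have hρE : ρ {x | T < M x} = ∑ R ∈ maxCubes F w T, ρ R := by
      rw [hE]; exact measure_biUnion_finset hdisj hmQ
    rw [hνE, hρE, Finset.mul_sum]
    refine Finset.sum_le_sum fun R hR => ?_
    have hRF := (maxCubes_mem hR).1
    have hwR : T < w R := (maxCubes_mem hR).2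
    have hνR : ν R = setInt R σ := hνQ R hRF
    have hρR : ρ R = setInt R (fun x => f x * σ x) := hρQ (hmQ R hR)
    have hwRval : w R = setInt R (fun x => f x * σ x) / setInt R σ := rfl
    rw [hwRval] at hwR
    by_cases h0 : setInt R σ = 0
    · rw [setInt_sigma_zero (hF R hRF).measurableSet hσ0 hσm hf0 hfm h0, h0] at hwR
      simp only [ENNReal.zero_div] at hwR
      exact absurd hwR (by simp)
    · have hνRne : ν R ≠ 0 := by rw [hνR]; exact h0
      have hνRnetop : ν R ≠ ∞ := by rw [hνR]; exact setInt_ne_top (hF R hRF) hσloc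
      have : T < ρ R / ν R := by
        rw [hρR, hνR]
        exact hwR
      rw [ENNReal.lt_div_iff_mul_lt (Or.inl hνRne) (Or.inl hνRnetop)] at this
      exact this.le
  -- pass to the ρ-integral
  have hstep : X ≤ ENNReal.ofReal p *
      ∫⁻ t in Ioi (0:ℝ), ρ {x | ENNReal.ofReal t < M x} * ENNReal.ofReal (t ^ (p - 2)) := by
    rw [hlc]
    refine mul_le_mul_right (lintegral_mono_ae ?_) _
    filter_upwards [self_mem_ae_restrict measurableSet_Ioi] with t ht
    rw [Set.mem_Ioi] at ht
    rw [hEeq t ht.le]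
    set T := ENNReal.ofReal t with hT
    have hT0 : T ≠ 0 := by simp [hT, ht]
    have hTtop : T ≠ ∞ := ENNReal.ofReal_ne_top
    have h1 : ν {x | T < M x} ≤ ρ {x | T < M x} / T := by
      rw [ENNReal.le_div_iff_mul_le (Or.inl hT0) (Or.inl hTtop), mul_comm]
      exact hweak t ht
    calc ν {x | T < M x} * ENNReal.ofReal (t ^ (p - 1))
        ≤ ρ {x | T < M x} / T * ENNReal.ofReal (t ^ (p - 1)) :=
          mul_le_mul_left h1 _
      _ = ρ {x | T < M x} * (ENNReal.ofReal (t ^ (p - 1)) / T) := by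
          rw [div_eq_mul_inv, div_eq_mul_inv]; ring
      _ = ρ {x | T < M x} * ENNReal.ofReal (t ^ (p - 2)) := by
          congr 1
          have htt : t ^ (p - 1) = t ^ (p - 2) * t := by
            rw [← Real.rpow_add_one (ne_of_gt ht) (p - 2)]
            ring_nf
          rw [hT, htt, ENNReal.ofReal_mul (Real.rpow_nonneg ht.le _), mul_div_assoc,
            ENNReal.div_self (ENNReal.ofReal_pos.2 ht).ne' ENNReal.ofReal_ne_top, mul_one]
  -- Fubini
  set S : Set (ℝ × Rn n) := {y | ENNReal.ofReal y.1 < M y.2} with hS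
  have hSm : MeasurableSet S := by
    refine measurableSet_lt ?_ ?_
    · fun_prop
    · exact hMm.comp measurable_snd
  set H : ℝ → Rn n → ℝ≥0∞ := fun t x =>
    S.indicator (fun y => ENNReal.ofReal (y.1 ^ (p - 2)) * (f' y.2 * σ' y.2)) (t, x) with hH
  have hHm : Measurable (Function.uncurry H) := by
    have : Function.uncurry H =
        S.indicator (fun y => ENNReal.ofReal (y.1 ^ (p - 2)) * (f' y.2 * σ' y.2)) := by
      funext y
      cases y
      rfl
    rw [this]
    refine Measurable.indicator ?_ hSm
    refine Measurable.mul (f := fun y : ℝ × Rn n => ENNReal.ofReal (y.1 ^ (p - 2)))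
      (g := fun y => f' y.2 * σ' y.2) ?_ ?_
    · exact (measurable_fst.pow_const _).ennreal_ofReal
    · exact ((hf'm.comp measurable_snd).mul (hσ'm.comp measurable_snd))
  have hinner1 : ∀ t : ℝ, (∫⁻ x, H t x) =
      ρ {x | ENNReal.ofReal t < M x} * ENNReal.ofReal (t ^ (p - 2)) := by
    intro t
    have hptw : ∀ x, H t x = {x | ENNReal.ofReal t < M x}.indicator
        (fun x => ENNReal.ofReal (t ^ (p - 2)) * (f' x * σ' x)) x := by
      intro x
      by_cases hx : ENNReal.ofReal t < M x
      · simp only [hH]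
        rw [Set.indicator_of_mem (show (t,x) ∈ S from hx),
          Set.indicator_of_mem (show x ∈ {x | ENNReal.ofReal t < M x} from hx)]
      · simp only [hH]
        rw [Set.indicator_of_notMem (show (t,x) ∉ S from hx),
          Set.indicator_of_notMem (show x ∉ {x | ENNReal.ofReal t < M x} from hx)]
    simp_rw [hptw]
    rw [lintegral_indicator (hEm _) _, lintegral_const_mul _ (by fun_prop), mul_comm]
    congr 1
    rw [hρ, withDensity_apply _ (hEm _)]
  have hinner2 : ∀ x : Rn n, (∫⁻ t in Ioi (0:ℝ), H t x) =
      f' x * σ' x * (M x ^ (p - 1) / ENNReal.ofReal (p - 1)) := by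
    intro x
    have hptw : ∀ t : ℝ, H t x = f' x * σ' x *
        {t : ℝ | ENNReal.ofReal t < M x}.indicator
          (fun t => ENNReal.ofReal (t ^ (p - 1 - 1))) t := by
      intro t
      by_cases hx : ENNReal.ofReal t < M x
      · simp only [hH]
        rw [Set.indicator_of_mem (show (t,x) ∈ S from hx),
          Set.indicator_of_mem (show t ∈ {t : ℝ | ENNReal.ofReal t < M x} from hx)]
        rw [show p - 1 - 1 = p - 2 by ring]
        ring
      · simp only [hH]
        rw [Set.indicator_of_notMem (show (t,x) ∉ S from hx),
          Set.indicator_of_notMem (show t ∉ {t : ℝ | ENNReal.ofReal t < M x} from hx)]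
        rw [mul_zero]
    simp_rw [hptw]
    rw [lintegral_const_mul' _ _ (ENNReal.mul_ne_top ENNReal.ofReal_ne_top
      ENNReal.ofReal_ne_top)]
    congr 1
    exact lintegral_Ioi_rpow_indicator hp1 (hMne x)
  have hswap : (∫⁻ t in Ioi (0:ℝ), ∫⁻ x, H t x) = ∫⁻ x, ∫⁻ t in Ioi (0:ℝ), H t x := by
    exact lintegral_lintegral_swap hHm.aemeasurable
  -- put it together
  have hmain : X ≤ ENNReal.ofReal (conjExp p) *
      ∫⁻ x, f' x * M x ^ (p - 1) * σ' x := by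
    have h1 : X ≤ ENNReal.ofReal p * ∫⁻ x, f' x * σ' x * (M x ^ (p - 1) /
        ENNReal.ofReal (p - 1)) := by
      refine le_trans hstep (mul_le_mul_right ?_ _)
      have e1 : (∫⁻ t in Ioi (0:ℝ),
          ρ {x | ENNReal.ofReal t < M x} * ENNReal.ofReal (t ^ (p - 2)))
          = ∫⁻ t in Ioi (0:ℝ), ∫⁻ x, H t x := by
        refine lintegral_congr_ae ?_
        filter_upwards [self_mem_ae_restrict measurableSet_Ioi] with t _
        exact (hinner1 t).symm
      rw [e1, hswap]
      exact le_of_eq (lintegral_congr fun x => hinner2 x)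
    refine le_trans h1 (le_of_eq ?_)
    have h2 : ∀ x, f' x * σ' x * (M x ^ (p - 1) / ENNReal.ofReal (p - 1)) =
        f' x * M x ^ (p - 1) * σ' x * (ENNReal.ofReal (p - 1))⁻¹ := by
      intro x
      rw [div_eq_mul_inv]
      ring
    simp_rw [h2]
    rw [lintegral_mul_const' ((ENNReal.ofReal (p - 1))⁻¹) _ (by
      simp only [ne_eq, ENNReal.inv_eq_top, ENNReal.ofReal_eq_zero, not_le]
      exact hp1)]
    rw [show ENNReal.ofReal (conjExp p) = ENNReal.ofReal p * (ENNReal.ofReal (p - 1))⁻¹ by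
      rw [conjExp, ENNReal.ofReal_div_of_pos hp1, div_eq_mul_inv]]
    ring
  -- Hölder
  set pc := conjExp p with hpc
  have hpcpos : 0 < pc := by
    rw [hpc, conjExp]
    positivity
  have hpq : p.HolderConjugate pc := by
    rw [hpc, conjExp]
    exact Real.HolderConjugate.conjExponent hp
  have hNdef : nLpR p σ f = (∫⁻ x, f' x ^ p * σ' x) ^ (1/p) := rfl
  have hhold : (∫⁻ x, f' x * M x ^ (p - 1) * σ' x) ≤ nLpR p σ f * X ^ (1/pc) := by
    have hptw : ∀ x, f' x * M x ^ (p - 1) * σ' x =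
        (f' x * σ' x ^ (1/p)) * (M x ^ (p - 1) * σ' x ^ (1/pc)) := by
      intro x
      have hσ1 : σ' x ^ (1/p) * σ' x ^ (1/pc) = σ' x := by
        rw [← ENNReal.rpow_add_of_nonneg _ _ (by positivity) (by positivity),
          show 1/p + 1/pc = 1 by
            rw [one_div, one_div]; exact hpq.inv_add_inv_eq_one,
          ENNReal.rpow_one]
      calc f' x * M x ^ (p - 1) * σ' x
          = f' x * M x ^ (p - 1) * (σ' x ^ (1/p) * σ' x ^ (1/pc)) := by rw [hσ1]
        _ = _ := by ring
    simp_rw [hptw]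
    have hu : AEMeasurable (fun x => f' x * σ' x ^ (1/p)) volume := by fun_prop
    have hv : AEMeasurable (fun x => M x ^ (p - 1) * σ' x ^ (1/pc)) volume := by
      exact ((hMm.pow_const _).mul (hσ'm.pow_const _)).aemeasurable
    refine le_trans (ENNReal.lintegral_mul_le_Lp_mul_Lq volume hpq hu hv) ?_
    refine mul_le_mul ?_ ?_ (zero_le) (zero_le)
    · rw [hNdef]
      refine le_of_eq ?_
      congr 1
      refine lintegral_congr fun x => ?_
      rw [ENNReal.mul_rpow_of_nonneg _ _ hp0.le, ← ENNReal.rpow_mul,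
        one_div_mul_cancel hp0.ne', ENNReal.rpow_one]
    · refine le_of_eq ?_
      congr 1
      refine lintegral_congr fun x => ?_
      rw [ENNReal.mul_rpow_of_nonneg _ _ hpcpos.le, ← ENNReal.rpow_mul,
        ← ENNReal.rpow_mul]
      congr 2
      · rw [hpc, conjExp]
        field_simp
      · rw [one_div_mul_cancel hpcpos.ne', ENNReal.rpow_one]
  -- conclude
  by_cases hX0' : X = 0
  · have hX0 : X = 0 := hX0'
    rw [hX0]
    exact zero_le
  · have hX0 : X ≠ 0 := hX0'
    have hfinal : X ≤ ENNReal.ofReal pc * nLpR p σ f * X ^ (1/pc) := by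
      calc X ≤ ENNReal.ofReal pc * (nLpR p σ f * X ^ (1/pc)) :=
            le_trans hmain (mul_le_mul_right hhold _)
        _ = ENNReal.ofReal pc * nLpR p σ f * X ^ (1/pc) := by ring
    have hXppc : X = X ^ (1/p) * X ^ (1/pc) := by
      rw [← ENNReal.rpow_add _ _ hX0 hXfin,
        show 1/p + 1/pc = 1 by rw [one_div, one_div]; exact hpq.inv_add_inv_eq_one,
        ENNReal.rpow_one]
    have hc0 : X ^ (1/pc) ≠ 0 := by
      simp only [ne_eq, ENNReal.rpow_eq_zero_iff, not_or]
      constructor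
      · rintro ⟨h, -⟩; exact hX0 h
      · rintro ⟨h, -⟩; exact hXfin h
    have hctop : X ^ (1/pc) ≠ ∞ := ENNReal.rpow_ne_top_of_nonneg (by positivity) hXfin
    have h1p : X ^ (1/p) ≤ ENNReal.ofReal pc * nLpR p σ f := by
      rw [← ENNReal.mul_le_mul_iff_left hc0 hctop, ← hXppc]
      exact hfinal
    calc X = (X ^ (1/p)) ^ p := by
          rw [← ENNReal.rpow_mul, one_div_mul_cancel hp0.ne', ENNReal.rpow_one]
      _ ≤ (ENNReal.ofReal pc * nLpR p σ f) ^ p := ENNReal.rpow_le_rpow h1p hp0.le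
      _ = (ENNReal.ofReal (conjExp p) * nLpR p σ f) ^ p := by rw [hpc]

end MaxThm

section Key

open Set MeasureTheory
open scoped Classical

lemma keyF {n m : ℕ} (p : Fin m → ℝ) (pp : ℝ)
    (hp : ∀ i, 1 < p i) (hpp : 1 / pp = ∑ i, 1 / p i) (hpp1 : 1 < pp)
    (σ : Fin m → Rn n → ℝ) (hσ0 : ∀ i x, 0 ≤ σ i x) (hσm : ∀ i, Measurable (σ i))
    (hσloc : ∀ i, LocallyIntegrable (σ i) volume)
    (A : ℝ≥0∞) (a : Set (Rn n) → ℝ≥0∞)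
    (hCarleson : ∀ R : Set (Rn n), IsDyadicCube R →
      (∑' Q : {Q : Set (Rn n) // IsDyadicCube Q ∧ Q ⊆ R}, a Q.1) ≤
        A * setInt R fun x => ∏ i, σ i x ^ (pp / p i))
    (f : Fin m → Rn n → ℝ) (hf0 : ∀ i x, 0 ≤ f i x) (hfm : ∀ i, Measurable (f i))
    (hfLp : ∀ i, (∫⁻ x, ENNReal.ofReal (f i x) ^ p i * ENNReal.ofReal (σ i x)) < ∞)
    (F : Finset (Set (Rn n))) (hF : ∀ Q ∈ F, IsDyadicCube Q) :
    (∑ Q ∈ F, a Q * (∏ i, wAvg Q (σ i) (f i)) ^ pp) ≤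
      A * ∏ i, (ENNReal.ofReal (conjExp (p i)) * nLpR (p i) (σ i) (f i)) ^ pp := by
  have hpp0 : (0:ℝ) < pp := by linarith
  have hpi0 : ∀ i, (0:ℝ) < p i := fun i => lt_trans one_pos (hp i)
  set lam : Set (Rn n) → ℝ≥0∞ := fun Q => ∏ i, wAvg Q (σ i) (f i) with hlam
  have hlamne : ∀ Q ∈ F, lam Q ≠ ∞ := by
    intro Q hQ
    rw [hlam, ← lt_top_iff_ne_top]
    exact ENNReal.prod_lt_top fun i _ => lt_top_iff_ne_top.2
      (wAvg_ne_top (hF Q hQ) (hp i).le (hσ0 i) (hσm i) (hσloc i) (hf0 i) (hfm i) (hfLp i))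
  set Gfun : Rn n → ℝ≥0∞ := fun x => ∏ i, (ENNReal.ofReal (σ i x)) ^ (pp / p i) with hGfun
  have hGm : Measurable Gfun := by
    refine Finset.measurable_prod _ fun i _ => ?_
    exact ((hσm i).ennreal_ofReal).pow_const _
  have hGofReal : ∀ x, ENNReal.ofReal (∏ i, σ i x ^ (pp / p i)) = Gfun x := by
    intro x
    rw [hGfun, ENNReal.ofReal_prod_of_nonneg (fun i _ => Real.rpow_nonneg (hσ0 i x) _)]
    exact Finset.prod_congr rfl fun i _ =>
      (ENNReal.ofReal_rpow_of_nonneg (hσ0 i x) (div_nonneg hpp0.le (hpi0 i).le)).symm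
  set GV : Measure (Rn n) := volume.withDensity Gfun with hGV
  have hGVset : ∀ {R : Set (Rn n)}, MeasurableSet R →
      GV R = setInt R fun x => ∏ i, σ i x ^ (pp / p i) := by
    intro R hR
    rw [hGV, withDensity_apply _ hR, setInt]
    exact (setLIntegral_congr_fun hR (fun x _ =>
      (hGofReal x).symm))
  -- the maximal functions
  set M : Rn n → ℝ≥0∞ := MsupF F lam with hM
  have hQm : ∀ Q ∈ F, MeasurableSet Q := fun Q hQ => (hF Q hQ).measurableSet
  have hMm : Measurable M := measurable_msupF hQm
  have hMne : ∀ x, M x ≠ ∞ := fun x => msupF_ne_top hlamne x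
  have hEm : ∀ T : ℝ≥0∞, MeasurableSet {x | T < M x} :=
    fun T => measurableSet_lt measurable_const hMm
  -- Step A : Carleson + stopping cubes
  have stepA : ∀ T : ℝ≥0∞,
      (∑ Q ∈ F.filter fun Q => T < lam Q, a Q) ≤ A * GV {x | T < M x} := by
    intro T
    have hSSsub : ∀ R ∈ maxCubes F lam T, R ∈ F ∧ T < lam R := fun R hR => maxCubes_mem hR
    have hcover : F.filter (fun Q => T < lam Q) = (maxCubes F lam T).biUnion
        fun R => (F.filter fun Q => T < lam Q).filter (· ⊆ R) := by
      ext Q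
      simp only [Finset.mem_biUnion, Finset.mem_filter]
      constructor
      · rintro ⟨hQF, hQT⟩
        obtain ⟨R, hR, hsub⟩ := exists_maxCube hQF hQT
        exact ⟨R, hR, ⟨hQF, hQT⟩, hsub⟩
      · rintro ⟨R, hR, ⟨hQF, hQT⟩, -⟩
        exact ⟨hQF, hQT⟩
    have hdisjB : (↑(maxCubes F lam T) : Set (Set (Rn n))).PairwiseDisjoint
        fun R => (F.filter fun Q => T < lam Q).filter (· ⊆ R) := by
      intro R hR R' hR' hne
      simp only [Function.onFun]
      rw [Finset.disjoint_left]
      intro Q hQ1 hQ2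
      have hQR : Q ⊆ R := (Finset.mem_filter.1 hQ1).2
      have hQR' : Q ⊆ R' := (Finset.mem_filter.1 hQ2).2
      have hQF : Q ∈ F := (Finset.mem_filter.1 (Finset.mem_filter.1 hQ1).1).1
      obtain ⟨x, hx⟩ := (hF Q hQF).nonempty
      have hd := maxCubes_pairwise_disjoint hF (Finset.mem_coe.1 hR)
        (Finset.mem_coe.1 hR') hne
      exact Set.disjoint_left.1 hd (hQR hx) (hQR' hx)
    have hperR : ∀ R ∈ maxCubes F lam T,
        (∑ Q ∈ (F.filter fun Q => T < lam Q).filter (· ⊆ R), a Q) ≤ A * GV R := by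
      intro R hR
      have hRd : IsDyadicCube R := hF R (hSSsub R hR).1
      have h1 : (∑ Q ∈ (F.filter fun Q => T < lam Q).filter (· ⊆ R), a Q) =
          ∑ Q ∈ (F.filter fun Q => T < lam Q).filter (· ⊆ R),
            {Q : Set (Rn n) | IsDyadicCube Q ∧ Q ⊆ R}.indicator a Q := by
        refine Finset.sum_congr rfl fun Q hQ => ?_
        have hQF : Q ∈ F := (Finset.mem_filter.1 (Finset.mem_filter.1 hQ).1).1
        exact (Set.indicator_of_mem (show Q ∈ {Q : Set (Rn n) | IsDyadicCube Q ∧ Q ⊆ R}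
          from ⟨hF Q hQF, (Finset.mem_filter.1 hQ).2⟩) a).symm
      rw [h1]
      calc (∑ Q ∈ (F.filter fun Q => T < lam Q).filter (· ⊆ R),
            {Q : Set (Rn n) | IsDyadicCube Q ∧ Q ⊆ R}.indicator a Q)
          ≤ ∑' Q : Set (Rn n), {Q : Set (Rn n) | IsDyadicCube Q ∧ Q ⊆ R}.indicator a Q :=
            ENNReal.sum_le_tsum _
        _ = ∑' Q : {Q : Set (Rn n) // IsDyadicCube Q ∧ Q ⊆ R}, a Q.1 :=
            (tsum_subtype _ a).symm
        _ ≤ A * setInt R (fun x => ∏ i, σ i x ^ (pp / p i)) := hCarleson R hRd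
        _ = A * GV R := by rw [hGVset hRd.measurableSet]
    have hmQ : ∀ R ∈ maxCubes F lam T, MeasurableSet R :=
      fun R hR => (hF R (hSSsub R hR).1).measurableSet
    have hdisjS : (↑(maxCubes F lam T) : Set (Set (Rn n))).PairwiseDisjoint (fun R => R) :=
      fun R hR R' hR' hne => maxCubes_pairwise_disjoint hF hR hR' hne
    have hGVE : GV {x | T < M x} = ∑ R ∈ maxCubes F lam T, GV R := by
      rw [hM, ← biUnion_maxCubes]
      exact measure_biUnion_finset hdisjS hmQ
    calc (∑ Q ∈ F.filter fun Q => T < lam Q, a Q)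
        = ∑ R ∈ maxCubes F lam T, ∑ Q ∈ (F.filter fun Q => T < lam Q).filter (· ⊆ R), a Q := by
          conv_lhs => rw [hcover]
          rw [Finset.sum_biUnion hdisjB]
      _ ≤ ∑ R ∈ maxCubes F lam T, A * GV R := Finset.sum_le_sum hperR
      _ = A * ∑ R ∈ maxCubes F lam T, GV R := by rw [Finset.mul_sum]
      _ = A * GV {x | T < M x} := by rw [hGVE]
  -- the measure `μF = ∑_{Q ∈ F} a_Q δ_Q` on the space of cubes
  letI : MeasurableSpace (Set (Rn n)) := ⊤
  have hmeasT : ∀ g : Set (Rn n) → ℝ≥0∞, Measurable g :=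
    fun g _ _ => MeasurableSpace.measurableSet_top
  have hmeasTR : ∀ g : Set (Rn n) → ℝ, Measurable g :=
    fun g _ _ => MeasurableSpace.measurableSet_top
  set μF : Measure (Set (Rn n)) := ∑ Q ∈ F, a Q • Measure.dirac Q with hμF
  have hμFapp : ∀ S : Set (Set (Rn n)), μF S = ∑ Q ∈ F.filter (· ∈ S), a Q := by
    intro S
    rw [hμF, Measure.finset_sum_apply]
    rw [Finset.sum_filter]
    refine Finset.sum_congr rfl fun Q hQ => ?_
    rw [Measure.smul_apply, smul_eq_mul,
      Measure.dirac_apply' Q MeasurableSpace.measurableSet_top]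
    by_cases hQS : Q ∈ S
    · rw [Set.indicator_of_mem hQS, if_pos hQS, Pi.one_apply, mul_one]
    · rw [Set.indicator_of_notMem hQS, if_neg hQS, mul_zero]
  have hμFint : ∀ g : Set (Rn n) → ℝ≥0∞, (∫⁻ Q, g Q ∂μF) = ∑ Q ∈ F, a Q * g Q := by
    intro g
    rw [hμF, lintegral_finset_sum_measure]
    refine Finset.sum_congr rfl fun Q hQ => ?_
    rw [lintegral_smul_measure, lintegral_dirac' Q (hmeasT g), smul_eq_mul]
  -- layer cake for the discrete sum
  have hLHS : (∑ Q ∈ F, a Q * lam Q ^ pp) =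
      ENNReal.ofReal pp * ∫⁻ t in Ioi (0:ℝ),
        μF {Q | t < (lam Q).toReal} * ENNReal.ofReal (t ^ (pp - 1)) := by
    have h1 : (∑ Q ∈ F, a Q * lam Q ^ pp) =
        ∫⁻ Q, ENNReal.ofReal ((lam Q).toReal ^ pp) ∂μF := by
      rw [hμFint]
      refine Finset.sum_congr rfl fun Q hQ => ?_
      rw [← ENNReal.ofReal_rpow_of_nonneg ENNReal.toReal_nonneg hpp0.le,
        ENNReal.ofReal_toReal (hlamne Q hQ)]
    rw [h1]
    exact lintegral_rpow_eq_lintegral_meas_lt_mul μF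
      (Filter.Eventually.of_forall fun Q => ENNReal.toReal_nonneg)
      (hmeasTR _).aemeasurable hpp0
  -- pass to the GV integral
  have hstep2 : (∑ Q ∈ F, a Q * lam Q ^ pp) ≤
      A * ∫⁻ x, M x ^ pp * Gfun x := by
    have hbound : ∀ t : ℝ, 0 < t → μF {Q | t < (lam Q).toReal} ≤
        A * GV {x | t < (M x).toReal} := by
      intro t ht
      have hseteq : F.filter (· ∈ {Q : Set (Rn n) | t < (lam Q).toReal}) =
          F.filter fun Q => ENNReal.ofReal t < lam Q := by
        refine Finset.filter_congr fun Q hQ => ?_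
        simp only [Set.mem_setOf_eq]
        rw [ENNReal.ofReal_lt_iff_lt_toReal ht.le (hlamne Q hQ)]
      have hseteq2 : {x | t < (M x).toReal} = {x | ENNReal.ofReal t < M x} := by
        ext x
        simp only [Set.mem_setOf_eq]
        exact (ENNReal.ofReal_lt_iff_lt_toReal ht.le (hMne x)).symm
      rw [hμFapp, hseteq, hseteq2]
      exact stepA (ENNReal.ofReal t)
    have hback : (∫⁻ x, M x ^ pp * Gfun x) = ENNReal.ofReal pp *
        ∫⁻ t in Ioi (0:ℝ), GV {x | t < (M x).toReal} * ENNReal.ofReal (t ^ (pp - 1)) := by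
      have h1 : (∫⁻ x, M x ^ pp * Gfun x) =
          ∫⁻ x, ENNReal.ofReal ((M x).toReal ^ pp) ∂GV := by
        rw [hGV, lintegral_withDensity_eq_lintegral_mul _ hGm
          (((hMm.ennreal_toReal).pow_const pp).ennreal_ofReal)]
        refine lintegral_congr fun x => ?_
        simp only [Pi.mul_apply]
        rw [← ENNReal.ofReal_rpow_of_nonneg ENNReal.toReal_nonneg hpp0.le,
          ENNReal.ofReal_toReal (hMne x)]
        exact mul_comm _ _
      rw [h1]
      exact lintegral_rpow_eq_lintegral_meas_lt_mul GV
        (Filter.Eventually.of_forall fun x => ENNReal.toReal_nonneg)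
        (hMm.ennreal_toReal).aemeasurable hpp0
    have hgm : Measurable fun t : ℝ =>
        GV {x | t < (M x).toReal} * ENNReal.ofReal (t ^ (pp - 1)) := by
      refine Measurable.mul ?_ (by fun_prop)
      refine Antitone.measurable fun s t hst => ?_
      exact measure_mono fun x hx => lt_of_le_of_lt hst hx
    calc (∑ Q ∈ F, a Q * lam Q ^ pp)
        = ENNReal.ofReal pp * ∫⁻ t in Ioi (0:ℝ),
            μF {Q | t < (lam Q).toReal} * ENNReal.ofReal (t ^ (pp - 1)) := hLHS
      _ ≤ ENNReal.ofReal pp * ∫⁻ t in Ioi (0:ℝ),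
            A * (GV {x | t < (M x).toReal} * ENNReal.ofReal (t ^ (pp - 1))) := by
          refine mul_le_mul_right (lintegral_mono_ae ?_) _
          filter_upwards [self_mem_ae_restrict measurableSet_Ioi] with t ht
          rw [Set.mem_Ioi] at ht
          rw [← mul_assoc]
          exact mul_le_mul_left (hbound t ht) _
      _ = ENNReal.ofReal pp * (A * ∫⁻ t in Ioi (0:ℝ),
            GV {x | t < (M x).toReal} * ENNReal.ofReal (t ^ (pp - 1))) := by
          rw [lintegral_const_mul A hgm]
      _ = A * (ENNReal.ofReal pp * ∫⁻ t in Ioi (0:ℝ),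
            GV {x | t < (M x).toReal} * ENNReal.ofReal (t ^ (pp - 1))) := by ring
      _ = A * ∫⁻ x, M x ^ pp * Gfun x := by rw [← hback]
  -- pointwise domination and Hölder
  set Mi : Fin m → Rn n → ℝ≥0∞ := fun i => MsupF F fun Q => wAvg Q (σ i) (f i) with hMi
  have hMim : ∀ i, Measurable (Mi i) := fun i => measurable_msupF hQm
  have hpsum : ∑ i, pp / p i = 1 := by
    have h1 : ∀ i : Fin m, pp / p i = pp * (1 / p i) := fun i => by
      rw [div_eq_mul_one_div]
    simp_rw [h1]
    rw [← Finset.mul_sum, ← hpp, mul_one_div_cancel hpp0.ne']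
  have hptwise : ∀ x, M x ^ pp * Gfun x ≤
      ∏ i, ((Mi i x) ^ p i * ENNReal.ofReal (σ i x)) ^ (pp / p i) := by
    intro x
    have h1 : M x ≤ ∏ i, Mi i x := msupF_le_prod x
    calc M x ^ pp * Gfun x
        ≤ (∏ i, Mi i x) ^ pp * Gfun x :=
          mul_le_mul_left (ENNReal.rpow_le_rpow h1 hpp0.le) _
      _ = (∏ i, (Mi i x) ^ pp) * ∏ i, (ENNReal.ofReal (σ i x)) ^ (pp / p i) := by
          rw [ENNReal.prod_rpow_of_nonneg hpp0.le]
      _ = ∏ i, ((Mi i x) ^ pp * (ENNReal.ofReal (σ i x)) ^ (pp / p i)) := by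
          rw [Finset.prod_mul_distrib]
      _ = ∏ i, ((Mi i x) ^ p i * ENNReal.ofReal (σ i x)) ^ (pp / p i) := by
          refine Finset.prod_congr rfl fun i _ => ?_
          rw [ENNReal.mul_rpow_of_nonneg _ _ (div_nonneg hpp0.le (hpi0 i).le),
            ← ENNReal.rpow_mul,
            show p i * (pp / p i) = pp by
              rw [mul_div_assoc', mul_comm, mul_div_assoc, div_self (hpi0 i).ne', mul_one]]
  have hhold : (∫⁻ x, M x ^ pp * Gfun x) ≤
      ∏ i, (∫⁻ x, (Mi i x) ^ p i * ENNReal.ofReal (σ i x)) ^ (pp / p i) := by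
    refine le_trans (lintegral_mono hptwise) ?_
    exact ENNReal.lintegral_prod_norm_pow_le Finset.univ
      (fun i _ => (((hMim i).pow_const _).mul ((hσm i).ennreal_ofReal)).aemeasurable)
      hpsum (fun i _ => div_nonneg hpp0.le (hpi0 i).le)
  have hmax : ∀ i, (∫⁻ x, (Mi i x) ^ p i * ENNReal.ofReal (σ i x)) ^ (pp / p i) ≤
      (ENNReal.ofReal (conjExp (p i)) * nLpR (p i) (σ i) (f i)) ^ pp := by
    intro i
    have h1 := maxthmF F hF (hp i) (hσ0 i) (hσm i) (hσloc i) (hf0 i) (hfm i) (hfLp i)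
    calc (∫⁻ x, (Mi i x) ^ p i * ENNReal.ofReal (σ i x)) ^ (pp / p i)
        ≤ ((ENNReal.ofReal (conjExp (p i)) * nLpR (p i) (σ i) (f i)) ^ p i) ^ (pp / p i) :=
          ENNReal.rpow_le_rpow h1 (div_nonneg hpp0.le (hpi0 i).le)
      _ = (ENNReal.ofReal (conjExp (p i)) * nLpR (p i) (σ i) (f i)) ^ pp := by
          rw [← ENNReal.rpow_mul, show p i * (pp / p i) = pp by
            rw [mul_div_assoc', mul_comm, mul_div_assoc, div_self (hpi0 i).ne', mul_one]]
  calc (∑ Q ∈ F, a Q * (∏ i, wAvg Q (σ i) (f i)) ^ pp)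
      = ∑ Q ∈ F, a Q * lam Q ^ pp := rfl
    _ ≤ A * ∫⁻ x, M x ^ pp * Gfun x := hstep2
    _ ≤ A * ∏ i, (∫⁻ x, (Mi i x) ^ p i * ENNReal.ofReal (σ i x)) ^ (pp / p i) :=
        mul_le_mul_right hhold _
    _ ≤ A * ∏ i, (ENNReal.ofReal (conjExp (p i)) * nLpR (p i) (σ i) (f i)) ^ pp :=
        mul_le_mul_right (Finset.prod_le_prod' fun i _ => hmax i) _

end Key


/-- Multilinear Carleson embedding: full conclusion of Lemma 3.1. -/
theorem stmt1 {n m : ℕ} (hm : 0 < m) (p : Fin m → ℝ) (pp : ℝ)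
    (hp : ∀ i, 1 < p i) (hpp : 1 / pp = ∑ i, 1 / p i) (hpp1 : 1 < pp)
    (σ : Fin m → Rn n → ℝ) (hσ0 : ∀ i x, 0 ≤ σ i x) (hσm : ∀ i, Measurable (σ i))
    (hσloc : ∀ i, LocallyIntegrable (σ i) volume)
    (A : ℝ≥0∞) (a : Set (Rn n) → ℝ≥0∞)
    (hCarleson : ∀ R : Set (Rn n), IsDyadicCube R →
      (∑' Q : {Q : Set (Rn n) // IsDyadicCube Q ∧ Q ⊆ R}, a Q.1) ≤
        A * setInt R fun x => ∏ i, σ i x ^ (pp / p i))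
    (f : Fin m → Rn n → ℝ) (hf0 : ∀ i x, 0 ≤ f i x) (hfm : ∀ i, Measurable (f i))
    (hfLp : ∀ i, (∫⁻ x, ENNReal.ofReal (f i x) ^ p i * ENNReal.ofReal (σ i x)) < ∞) :
    (∑' Q : {Q : Set (Rn n) // IsDyadicCube Q},
        a Q.1 * (∏ i, wAvg Q.1 (σ i) (f i)) ^ pp) ^ (1 / pp) ≤
      A ^ (1 / pp) * ∏ i, ENNReal.ofReal (conjExp (p i)) * nLpR (p i) (σ i) (f i) := by
    classical
  have hpp0 : (0:ℝ) < pp := by linarith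
  have hkey : (∑' Q : {Q : Set (Rn n) // IsDyadicCube Q},
      a Q.1 * (∏ i, wAvg Q.1 (σ i) (f i)) ^ pp) ≤
      A * (∏ i, ENNReal.ofReal (conjExp (p i)) * nLpR (p i) (σ i) (f i)) ^ pp := by
    rw [ENNReal.tsum_eq_iSup_sum]
    refine iSup_le fun s => ?_
    have h1 : (∑ q ∈ s, a q.1 * (∏ i, wAvg q.1 (σ i) (f i)) ^ pp) =
        ∑ Q ∈ s.image Subtype.val, a Q * (∏ i, wAvg Q (σ i) (f i)) ^ pp :=
      (Finset.sum_image (f := fun Q => a Q * (∏ i, wAvg Q (σ i) (f i)) ^ pp)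
        (g := Subtype.val) (fun x _ y _ h => Subtype.ext h)).symm
    rw [h1]
    refine le_trans (keyF p pp hp hpp hpp1 σ hσ0 hσm hσloc A a hCarleson f hf0 hfm hfLp
      (s.image Subtype.val) ?_) ?_
    · intro Q hQ
      obtain ⟨q, _, rfl⟩ := Finset.mem_image.1 hQ
      exact q.2
    · refine mul_le_mul_right (le_of_eq ?_) _
      exact ENNReal.prod_rpow_of_nonneg hpp0.le
  refine le_trans (ENNReal.rpow_le_rpow hkey (by positivity)) (le_of_eq ?_)
  rw [ENNReal.mul_rpow_of_nonneg _ _ (by positivity), ← ENNReal.rpow_mul,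
    mul_one_div_cancel hpp0.ne', ENNReal.rpow_one]
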